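/- Existence of an ecto-symbiote (prepender-style) virus with respect to a composition operator: given a total computable δ : ℕ × ℕ → ℕ such that for all v, j, x, φ_{δ(v,j)}(x) = (φ_v(x)) >>= φ_j (i.e., the infected form first runs v then runs j on the result), there exists a code v such that for every list L of codes, φ_v(encode L) = encode (List.map (fun j => δ(v, j)) L). -/

import Mathlib

/-- The `e`-th partial computable function in a standard Gödel numbering. -/
def phi (e : ℕ) : ℕ →. ℕ :=
  (Denumerable.ofNat Nat.Partrec.Code e).eval

open Computable in
theorem computable_list_map {α β σ : Type*} [Primcodable α] [Primcodable β] [Primcodable σ]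
    {f : α → List β} {g : α → β → σ} (hf : Computable f) (hg : Computable₂ g) :
    Computable fun a => (f a).map (g a) := by
  have step : Computable₂ fun (a : α) (p : ℕ × List σ) =>
      (Option.casesOn ((f a)[p.1]?) p.2 (fun b => p.2 ++ [g a b]) : List σ) := by
    apply option_casesOn (list_getElem?.comp (hf.comp fst) (fst.comp snd))
      (snd.comp snd)
    exact (list_append.comp (snd.comp (snd.comp fst))
      (list_cons.comp (hg.comp (fst.comp fst) snd) (const []))).to₂
  have key := Computable.nat_rec (list_length.comp hf) (const ([] : List σ)) step
  refine key.of_eq fun a => ?_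
  have H : ∀ n, (Nat.rec ([] : List σ)
      (fun y IH => Option.casesOn ((f a)[y]?) IH (fun b => IH ++ [g a b])) n)
      = ((f a).take n).map (g a) := by
    intro n
    induction n with
    | zero => simp
    | succ n ih =>
      simp only [ih]
      rcases h : (f a)[n]? with _ | b
      · rw [List.getElem?_eq_none_iff] at h
        simp [List.take_of_length_le h, List.take_of_length_le (Nat.le_succ_of_le h)]
      · have h' : (f a)[n]? = some b := by exact h
        simp [List.take_succ, h']
  simpa using H (f a).length

/-- Existence of an ecto-symbiote virus w.r.t. a composition operator `δ`. -/
theorem ecto_symbiote_exists (δ : ℕ × ℕ → ℕ) (hδ : Computable δ)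
    (hsem : ∀ v j x : ℕ, phi (δ (v, j)) x = (phi v x) >>= phi j) :
    ∃ v : ℕ, ∀ L : List ℕ,
      phi v (Encodable.encode L) =
        Part.some (Encodable.encode (L.map fun j => δ (v, j))) := by
  have hg : Computable₂ fun (c : Nat.Partrec.Code) (n : ℕ) =>
      (Encodable.encode ((Denumerable.ofNat (List ℕ) n).map
        fun j => δ (Encodable.encode c, j)) : ℕ) := by
    apply Computable.encode.comp
    apply computable_list_map ((Computable.ofNat (List ℕ)).comp Computable.snd)
    exact (hδ.comp ((Computable.encode.comp (Computable.fst.comp Computable.fst)).pair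
      Computable.snd)).to₂
  obtain ⟨c, hc⟩ := Nat.Partrec.Code.fixed_point₂ (f := fun c n =>
    Part.some (Encodable.encode ((Denumerable.ofNat (List ℕ) n).map
      fun j => δ (Encodable.encode c, j)))) hg.partrec₂
  refine ⟨Encodable.encode c, fun L => ?_⟩
  have : phi (Encodable.encode c) = c.eval := by
    simp [phi, Denumerable.ofNat_encode]
  rw [this, hc]
  simp [Denumerable.ofNat_encode]
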